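/- Let n ≥ 3 and let d ∈ ℝ^{1,n} satisfy d·d > 0 and d·E > 0 for every exceptional class E ∈ ℰ_K. Then there exists w ∈ W_n such that w(d) is reduced; moreover the reduced representative is unique: if w_1, w_2 ∈ W_n are such that both w_1(d) and w_2(d) are reduced, then w_1(d) = w_2(d). (Proposition 2.11(4): the reduced classes form a fundamental domain of the K-symplectic cone under the action of W_n.) -/

import Mathlib

open Finset

noncomputable section

/-- The intersection pairing on ℝ^{1,n}: coordinate `0` is the coefficient of `H`,
coordinate `i.succ` is the coefficient of `E_{i+1}`.  `H·H = 1`, `E_i·E_i = -1`,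
distinct basis vectors are orthogonal. -/
def ip (n : ℕ) (x y : Fin (n + 1) → ℝ) : ℝ :=
  x 0 * y 0 - ∑ i : Fin n, x i.succ * y i.succ

/-- The canonical class `K = -3H + E_1 + ⋯ + E_n`. -/
def Kc (n : ℕ) : Fin (n + 1) → ℝ := fun j => if (j : ℕ) = 0 then -3 else 1

/-- The reflection `x ↦ x + (x·l)l` along `l`. -/
def reflAlong (n : ℕ) (l : Fin (n + 1) → ℝ) : Function.End (Fin (n + 1) → ℝ) :=
  fun x => x + ip n x l • l

/-- The simple roots: `l_0 = H - E_1 - E_2 - E_3` and `l_i = E_i - E_{i+1}`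
for `1 ≤ i ≤ n - 1`. -/
def root (n : ℕ) (i : Fin n) : Fin (n + 1) → ℝ :=
  if (i : ℕ) = 0 then
    fun j => if (j : ℕ) = 0 then 1 else if (j : ℕ) ≤ 3 then -1 else 0
  else
    fun j => if (j : ℕ) = (i : ℕ) then 1 else if (j : ℕ) = (i : ℕ) + 1 then -1 else 0

/-- The Weyl group `W_n`, generated by the simple reflections `s_{l_0}, …, s_{l_{n-1}}`.
(The generators are involutions, so the submonoid they generate coincides with the
subgroup they generate.) -/
def Wgroup (n : ℕ) : Submonoid (Function.End (Fin (n + 1) → ℝ)) :=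
  Submonoid.closure (Set.range fun i : Fin n => reflAlong n (root n i))

/-- The class `E_n`. -/
def En (n : ℕ) : Fin (n + 1) → ℝ := fun j => if (j : ℕ) = n then 1 else 0

/-- The set `ℰ_K` of exceptional classes: the `W_n`-orbit of `E_n`. -/
def EK (n : ℕ) : Set (Fin (n + 1) → ℝ) := {e | ∃ w ∈ Wgroup n, e = w (En n)}

/-- The coefficients `m_1, …, m_n` of a class `νH - m_1E_1 - ⋯ - m_nE_n`
(so `mcoord n v i = -(v i.succ)`). -/
def mcoord (n : ℕ) (v : Fin (n + 1) → ℝ) : Fin n → ℝ := fun i => -(v i.succ)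

/-- A class `νH - m_1E_1 - ⋯ - m_nE_n` is reduced if
`m_1 ≥ m_2 ≥ ⋯ ≥ m_n ≥ 0` and `ν ≥ m_1 + m_2 + m_3`. -/
def IsReducedVec (n : ℕ) (v : Fin (n + 1) → ℝ) : Prop :=
  Antitone (mcoord n v) ∧ (∀ i, 0 ≤ mcoord n v i) ∧
    ∑ i ∈ Finset.univ.filter (fun i : Fin n => (i : ℕ) < 3), mcoord n v i ≤ v 0

/-! ### basic bilinearity -/

lemma ip_comm (n : ℕ) (x y : Fin (n+1) → ℝ) : ip n x y = ip n y x := by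
  unfold ip
  rw [mul_comm]
  congr 1
  exact Finset.sum_congr rfl fun i _ => mul_comm _ _

lemma ip_add_left (n : ℕ) (x x' y : Fin (n+1) → ℝ) :
    ip n (x + x') y = ip n x y + ip n x' y := by
  simp only [ip, Pi.add_apply, add_mul, Finset.sum_add_distrib]
  ring

lemma ip_smul_left (n : ℕ) (c : ℝ) (x y : Fin (n+1) → ℝ) :
    ip n (c • x) y = c * ip n x y := by
  simp only [ip, Pi.smul_apply, smul_eq_mul, mul_sub, Finset.mul_sum]
  ring_nf

lemma ip_add_right (n : ℕ) (x y y' : Fin (n+1) → ℝ) :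
    ip n x (y + y') = ip n x y + ip n x y' := by
  rw [ip_comm, ip_add_left, ip_comm n y, ip_comm n y']

lemma ip_smul_right (n : ℕ) (c : ℝ) (x y : Fin (n+1) → ℝ) :
    ip n x (c • y) = c * ip n x y := by
  rw [ip_comm, ip_smul_left, ip_comm]

lemma ip_neg_right (n : ℕ) (x y : Fin (n+1) → ℝ) : ip n x (-y) = -ip n x y := by
  have := ip_smul_right n (-1) x y
  simpa using this

lemma ip_comb_left (n : ℕ) (x y z : Fin (n+1) → ℝ) (c : ℝ) :
    ip n (x + c • y) z = ip n x z + c * ip n y z := by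
  rw [ip_add_left, ip_smul_left]

/-! ### reflections -/

lemma reflAlong_apply (n : ℕ) (l x : Fin (n+1) → ℝ) :
    reflAlong n l x = x + ip n x l • l := rfl

lemma refl_isometry (n : ℕ) (l : Fin (n+1) → ℝ) (hl : ip n l l = -2)
    (x y : Fin (n+1) → ℝ) : ip n (reflAlong n l x) (reflAlong n l y) = ip n x y := by
  simp only [reflAlong_apply]
  rw [ip_comb_left, ip_add_right, ip_add_right, ip_smul_right, ip_smul_right, hl]
  have h1 : ip n l y = ip n y l := ip_comm n l y
  ring_nf
  rw [h1]; ring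

lemma refl_invol (n : ℕ) (l : Fin (n+1) → ℝ) (hl : ip n l l = -2) :
    reflAlong n l * reflAlong n l = 1 := by
  funext x
  show reflAlong n l (reflAlong n l x) = x
  simp only [reflAlong_apply]
  rw [ip_comb_left, hl]
  funext j
  simp only [Pi.add_apply, Pi.smul_apply, smul_eq_mul]
  ring

lemma refl_linear (n : ℕ) (l : Fin (n+1) → ℝ) (a b : ℝ) (x y : Fin (n+1) → ℝ) :
    reflAlong n l (a • x + b • y) = a • reflAlong n l x + b • reflAlong n l y := by
  simp only [reflAlong_apply, ip_add_left, ip_smul_left]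
  funext j
  simp only [Pi.add_apply, Pi.smul_apply, smul_eq_mul]
  ring

/-! ### words and the Weyl group -/

def sgen (n : ℕ) (i : Fin n) : Function.End (Fin (n+1) → ℝ) := reflAlong n (root n i)

def wprod (n : ℕ) (L : List (Fin n)) : Function.End (Fin (n+1) → ℝ) :=
  (L.map (sgen n)).prod

lemma wprod_nil (n : ℕ) : wprod n [] = 1 := rfl

lemma wprod_cons (n : ℕ) (i : Fin n) (L : List (Fin n)) :
    wprod n (i :: L) = sgen n i * wprod n L := by
  simp [wprod]

lemma wprod_append (n : ℕ) (L L' : List (Fin n)) :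
    wprod n (L ++ L') = wprod n L * wprod n L' := by
  simp [wprod]

lemma sgen_mem (n : ℕ) (i : Fin n) : sgen n i ∈ Wgroup n :=
  Submonoid.subset_closure ⟨i, rfl⟩

lemma wprod_mem (n : ℕ) (L : List (Fin n)) : wprod n L ∈ Wgroup n := by
  induction L with
  | nil => exact (Wgroup n).one_mem
  | cons i L ih => rw [wprod_cons]; exact (Wgroup n).mul_mem (sgen_mem n i) ih

lemma mem_Wgroup_iff (n : ℕ) (w : Function.End (Fin (n+1) → ℝ)) :
    w ∈ Wgroup n ↔ ∃ L : List (Fin n), w = wprod n L := by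
  constructor
  · intro hw
    induction hw using Submonoid.closure_induction with
    | mem x hx =>
        obtain ⟨i, rfl⟩ := hx
        exact ⟨[i], by simp [wprod_cons, wprod_nil, sgen]⟩
    | one => exact ⟨[], rfl⟩
    | mul x y hx hy ihx ihy =>
        obtain ⟨L, rfl⟩ := ihx
        obtain ⟨L', rfl⟩ := ihy
        exact ⟨L ++ L', (wprod_append n L L').symm⟩
  · rintro ⟨L, rfl⟩
    exact wprod_mem n L

/-! ### coordinate formulas -/

lemma ip_root_succ (n : ℕ) (i : Fin n) (hi : (i:ℕ) ≠ 0) (v : Fin (n+1) → ℝ) :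
    ip n v (root n i) = v ⟨(i:ℕ)+1, by omega⟩ - v ⟨(i:ℕ), by omega⟩ := by
  have hlt := i.isLt
  have h1 : 1 ≤ (i:ℕ) := Nat.one_le_iff_ne_zero.mpr hi
  have hroot : root n i = fun j : Fin (n+1) =>
      if (j : ℕ) = (i:ℕ) then (1:ℝ) else if (j : ℕ) = (i:ℕ)+1 then -1 else 0 := by
    rw [root, if_neg hi]
  rw [ip]; simp only [hroot]
  have hz : ((0 : Fin (n+1)) : ℕ) = 0 := rfl
  rw [show (if ((0:Fin (n+1)) : ℕ) = (i:ℕ) then (1:ℝ) else if ((0:Fin (n+1)) : ℕ) = (i:ℕ)+1 then -1 else 0) = 0 by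
    rw [hz]; rw [if_neg (by omega), if_neg (by omega)]]
  rw [Finset.sum_eq_add (⟨(i:ℕ)-1, by omega⟩ : Fin n) (⟨(i:ℕ), by omega⟩ : Fin n)
    (by intro h; have := congrArg Fin.val h; simp at this; omega)
    (by
      intro c _ hc
      have hc1 : (c:ℕ) ≠ (i:ℕ)-1 := fun h => hc.1 (Fin.ext h)
      have hc2 : (c:ℕ) ≠ (i:ℕ) := fun h => hc.2 (Fin.ext h)
      have hcs : ((c.succ : Fin (n+1)) : ℕ) = (c:ℕ)+1 := rfl
      rw [hcs, if_neg (by omega), if_neg (by omega)]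
      ring)
    (by intro h; exact absurd (Finset.mem_univ _) h)
    (by intro h; exact absurd (Finset.mem_univ _) h)]
  have e1 : (((⟨(i:ℕ)-1, by omega⟩ : Fin n).succ : Fin (n+1)) : ℕ) = (i:ℕ) := by
    simp; omega
  have e2 : (((⟨(i:ℕ), by omega⟩ : Fin n).succ : Fin (n+1)) : ℕ) = (i:ℕ)+1 := rfl
  rw [e1, e2]
  rw [if_pos rfl, if_neg (by omega), if_pos rfl]
  have f1 : ((⟨(i:ℕ)-1, by omega⟩ : Fin n).succ : Fin (n+1)) = ⟨(i:ℕ), by omega⟩ := Fin.ext e1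
  have f2 : ((⟨(i:ℕ), by omega⟩ : Fin n).succ : Fin (n+1)) = ⟨(i:ℕ)+1, by omega⟩ := Fin.ext e2
  simp only [f1, f2]
  ring

lemma ip_root_zero (n : ℕ) (hn : 3 ≤ n) (i : Fin n) (hi : (i:ℕ) = 0) (v : Fin (n+1) → ℝ) :
    ip n v (root n i) = v 0 + v ⟨1, by omega⟩ + v ⟨2, by omega⟩ + v ⟨3, by omega⟩ := by
  have hroot : root n i = fun j : Fin (n+1) =>
      if (j:ℕ) = 0 then (1:ℝ) else if (j:ℕ) ≤ 3 then -1 else 0 := by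
    rw [root, if_pos hi]
  rw [ip]; simp only [hroot]
  have hz : ((0:Fin (n+1)):ℕ) = 0 := rfl
  rw [if_pos hz]
  set f : Fin n → ℝ := fun k =>
    v k.succ * (if ((k.succ : Fin (n+1)):ℕ) = 0 then (1:ℝ)
      else if ((k.succ : Fin (n+1)):ℕ) ≤ 3 then -1 else 0) with hf
  have hsub : ∑ k : Fin n, f k = ∑ k ∈ ({⟨0, by omega⟩, ⟨1, by omega⟩, ⟨2, by omega⟩} :
      Finset (Fin n)), f k := by
    refine (Finset.sum_subset (Finset.subset_univ _) ?_).symm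
    intro c _ hc
    simp only [Finset.mem_insert, Finset.mem_singleton] at hc
    push_neg at hc
    obtain ⟨h0, h1, h2⟩ := hc
    have hc0 : (c:ℕ) ≠ 0 := fun h => h0 (Fin.ext h)
    have hc1 : (c:ℕ) ≠ 1 := fun h => h1 (Fin.ext h)
    have hc2 : (c:ℕ) ≠ 2 := fun h => h2 (Fin.ext h)
    have hcs : ((c.succ : Fin (n+1)) : ℕ) = (c:ℕ)+1 := rfl
    rw [hf]
    simp only
    rw [hcs, if_neg (by omega), if_neg (by omega)]
    ring
  rw [hsub]
  have hne01 : (⟨0, by omega⟩ : Fin n) ≠ ⟨1, by omega⟩ := by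
    intro h; have := congrArg Fin.val h; simp at this
  have hne02 : (⟨0, by omega⟩ : Fin n) ≠ ⟨2, by omega⟩ := by
    intro h; have := congrArg Fin.val h; simp at this
  have hne12 : (⟨1, by omega⟩ : Fin n) ≠ ⟨2, by omega⟩ := by
    intro h; have := congrArg Fin.val h; simp at this
  rw [Finset.sum_insert (by simp [hne01, hne02]), Finset.sum_insert (by simp [hne12]),
    Finset.sum_singleton]
  have hv : ∀ (a : ℕ) (ha : a < 3), f ⟨a, by omega⟩ = -(v ⟨a+1, by omega⟩) := by
    intro a ha
    rw [hf]
    simp only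
    have hcs : (((⟨a, by omega⟩ : Fin n).succ : Fin (n+1)) : ℕ) = a+1 := rfl
    have hcs' : ((⟨a, by omega⟩ : Fin n).succ : Fin (n+1)) = ⟨a+1, by omega⟩ := Fin.ext hcs
    rw [hcs, if_neg (by omega), if_pos (by omega), hcs']
    ring
  rw [hv 0 (by omega), hv 1 (by omega), hv 2 (by omega)]
  ring

lemma ip_evec (n : ℕ) (j : ℕ) (h1 : 1 ≤ j) (hj : j ≤ n) (v : Fin (n+1) → ℝ) :
    ip n v (fun l : Fin (n+1) => if (l:ℕ) = j then (1:ℝ) else 0) = -(v ⟨j, by omega⟩) := by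
  rw [ip]
  rw [if_neg (by simp only [Fin.val_zero]; omega)]
  rw [Finset.sum_eq_single (⟨j-1, by omega⟩ : Fin n)
    (by
      intro c _ hc
      have hc1 : (c:ℕ) ≠ j-1 := fun h => hc (Fin.ext h)
      have hcs : ((c.succ : Fin (n+1)) : ℕ) = (c:ℕ)+1 := rfl
      rw [hcs, if_neg (by omega)]
      ring)
    (by intro h; exact absurd (Finset.mem_univ _) h)]
  have e1 : (((⟨j-1, by omega⟩ : Fin n).succ : Fin (n+1)) : ℕ) = j := by simp; omega
  have f1 : ((⟨j-1, by omega⟩ : Fin n).succ : Fin (n+1)) = ⟨j, by omega⟩ := Fin.ext e1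
  rw [e1, if_pos rfl, f1]
  ring

lemma ip_En' (n : ℕ) (hn : 1 ≤ n) (v : Fin (n+1) → ℝ) :
    ip n v (En n) = -(v ⟨n, by omega⟩) := by
  have : En n = fun l : Fin (n+1) => if (l:ℕ) = n then (1:ℝ) else 0 := rfl
  rw [this, ip_evec n n hn (le_refl n)]

lemma root_apply' (n : ℕ) (i : Fin n) (hi : (i:ℕ) ≠ 0) (j : Fin (n+1)) :
    root n i j = if (j:ℕ) = (i:ℕ) then (1:ℝ) else if (j:ℕ) = (i:ℕ)+1 then -1 else 0 := by
  rw [root, if_neg hi]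

lemma root0_apply (n : ℕ) (i : Fin n) (hi : (i:ℕ) = 0) (j : Fin (n+1)) :
    root n i j = if (j:ℕ) = 0 then (1:ℝ) else if (j:ℕ) ≤ 3 then -1 else 0 := by
  rw [root, if_pos hi]

lemma root_norm (n : ℕ) (hn : 3 ≤ n) (i : Fin n) : ip n (root n i) (root n i) = -2 := by
  by_cases hi : (i:ℕ) = 0
  · rw [ip_root_zero n hn i hi]
    rw [root0_apply n i hi, root0_apply n i hi, root0_apply n i hi, root0_apply n i hi]
    simp only [Fin.val_mk, Fin.val_zero]
    norm_num
  · have hlt := i.isLt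
    rw [ip_root_succ n i hi]
    rw [root_apply' n i hi, root_apply' n i hi]
    simp only [Fin.val_mk]
    split_ifs <;> first | omega | norm_num

lemma root_pair (n : ℕ) (hn : 3 ≤ n) (s t : Fin n) (hst : s ≠ t) :
    ip n (root n s) (root n t) = 0 ∨ ip n (root n s) (root n t) = 1 := by
  have hs := s.isLt
  have ht := t.isLt
  have hsym : ∀ a b : Fin n, ip n (root n a) (root n b) = ip n (root n b) (root n a) :=
    fun a b => ip_comm n _ _
  have key : ∀ a b : Fin n, (a:ℕ) ≠ 0 → a ≠ b →
      ip n (root n b) (root n a) = 0 ∨ ip n (root n b) (root n a) = 1 := by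
    intro a b ha hab
    have hb := b.isLt
    have ha' := a.isLt
    have hne : (a:ℕ) ≠ (b:ℕ) := fun h => hab (Fin.ext h)
    rw [ip_root_succ n a ha]
    by_cases hb0 : (b:ℕ) = 0
    · rw [root0_apply n b hb0, root0_apply n b hb0]
      simp only [Fin.val_mk]
      split_ifs <;> (first | contradiction | omega | norm_num)
    · rw [root_apply' n b hb0, root_apply' n b hb0]
      simp only [Fin.val_mk]
      split_ifs <;> first | omega | norm_num
  by_cases hs0 : (s:ℕ) = 0
  · have ht0 : (t:ℕ) ≠ 0 := by
      intro h; exact hst (Fin.ext (by rw [hs0, h]))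
    exact key t s ht0 (Ne.symm hst)
  · rw [hsym]
    exact key s t hs0 hst

lemma refl_comm (n : ℕ) (a b : Fin (n+1) → ℝ) (hab : ip n a b = 0) :
    reflAlong n a * reflAlong n b = reflAlong n b * reflAlong n a := by
  have hba : ip n b a = 0 := by rw [ip_comm]; exact hab
  funext x
  show reflAlong n a (reflAlong n b x) = reflAlong n b (reflAlong n a x)
  simp only [reflAlong_apply, ip_add_left, ip_smul_left, hab, hba]
  funext j
  simp only [Pi.add_apply, Pi.smul_apply, smul_eq_mul]
  ring

lemma refl_braid (n : ℕ) (a b : Fin (n+1) → ℝ) (ha : ip n a a = -2) (hb : ip n b b = -2)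
    (hab : ip n a b = 1) :
    reflAlong n a * reflAlong n b * reflAlong n a =
      reflAlong n b * reflAlong n a * reflAlong n b := by
  have hba : ip n b a = 1 := by rw [ip_comm]; exact hab
  funext x
  show reflAlong n a (reflAlong n b (reflAlong n a x)) =
    reflAlong n b (reflAlong n a (reflAlong n b x))
  simp only [reflAlong_apply, ip_add_left, ip_smul_left, ha, hb, hab, hba]
  funext j
  simp only [Pi.add_apply, Pi.smul_apply, smul_eq_mul]
  ring
/-! ### group plumbing -/

lemma sgen_invol (n : ℕ) (hn : 3 ≤ n) (i : Fin n) : sgen n i * sgen n i = 1 :=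
  refl_invol n _ (root_norm n hn i)

lemma sgen_iso (n : ℕ) (hn : 3 ≤ n) (i : Fin n) (x y : Fin (n+1) → ℝ) :
    ip n (sgen n i x) (sgen n i y) = ip n x y :=
  refl_isometry n _ (root_norm n hn i) x y

def IsLin (n : ℕ) (f : Function.End (Fin (n+1) → ℝ)) : Prop :=
  ∀ (a b : ℝ) (x y : Fin (n+1) → ℝ), f (a • x + b • y) = a • f x + b • f y

lemma sgen_lin (n : ℕ) (i : Fin n) : IsLin n (sgen n i) :=
  fun a b x y => refl_linear n _ a b x y

lemma wprod_lin (n : ℕ) (L : List (Fin n)) : IsLin n (wprod n L) := by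
  induction L with
  | nil => intro a b x y; rfl
  | cons i L ih =>
      intro a b x y
      rw [wprod_cons]
      show sgen n i (wprod n L (a • x + b • y)) = _
      rw [ih a b x y, sgen_lin n i a b (wprod n L x) (wprod n L y)]
      rfl

lemma wprod_iso (n : ℕ) (hn : 3 ≤ n) (L : List (Fin n)) (x y : Fin (n+1) → ℝ) :
    ip n (wprod n L x) (wprod n L y) = ip n x y := by
  induction L with
  | nil => rfl
  | cons i L ih =>
      rw [wprod_cons]
      show ip n (sgen n i (wprod n L x)) (sgen n i (wprod n L y)) = _
      rw [sgen_iso n hn i, ih]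

lemma wprod_reverse_mul (n : ℕ) (hn : 3 ≤ n) (L : List (Fin n)) :
    wprod n L * wprod n L.reverse = 1 := by
  induction L with
  | nil => simp [wprod_nil]
  | cons i L ih =>
      rw [wprod_cons, List.reverse_cons, wprod_append,
        show wprod n [i] = sgen n i from by simp [wprod, sgen]]
      have h1 : wprod n L * (wprod n L.reverse * sgen n i) = sgen n i := by
        rw [← mul_assoc, ih, one_mul]
      rw [mul_assoc, h1, sgen_invol n hn i]

lemma exists_inverse (n : ℕ) (hn : 3 ≤ n) (w : Function.End (Fin (n+1) → ℝ))
    (hw : w ∈ Wgroup n) : ∃ v ∈ Wgroup n, w * v = 1 ∧ v * w = 1 := by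
  obtain ⟨L, rfl⟩ := (mem_Wgroup_iff n w).mp hw
  refine ⟨wprod n L.reverse, wprod_mem n _, wprod_reverse_mul n hn L, ?_⟩
  have := wprod_reverse_mul n hn L.reverse
  rwa [List.reverse_reverse] at this

lemma iso_of_mem (n : ℕ) (hn : 3 ≤ n) (w : Function.End (Fin (n+1) → ℝ))
    (hw : w ∈ Wgroup n) (x y : Fin (n+1) → ℝ) : ip n (w x) (w y) = ip n x y := by
  obtain ⟨L, rfl⟩ := (mem_Wgroup_iff n w).mp hw
  exact wprod_iso n hn L x y

lemma lin_of_mem (n : ℕ) (w : Function.End (Fin (n+1) → ℝ)) (hw : w ∈ Wgroup n) :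
    IsLin n w := by
  obtain ⟨L, rfl⟩ := (mem_Wgroup_iff n w).mp hw
  exact wprod_lin n L

lemma lin_comb (n : ℕ) (w : Function.End (Fin (n+1) → ℝ)) (hw : IsLin n w)
    (x y : Fin (n+1) → ℝ) (c : ℝ) : w (x + c • y) = w x + c • w y := by
  have := hw 1 c x y
  simpa using this

lemma lin_neg (n : ℕ) (w : Function.End (Fin (n+1) → ℝ)) (hw : IsLin n w)
    (x : Fin (n+1) → ℝ) : w (-x) = -(w x) := by
  have := hw (-1) 0 x x
  simpa using this

/-- pairing against the image: `ip (w x) y = ip x (v y)` when `v` is the inverse of `w`. -/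
lemma ip_move (n : ℕ) (hn : 3 ≤ n) (w v : Function.End (Fin (n+1) → ℝ))
    (hw : w ∈ Wgroup n) (hwv : w * v = 1) (x y : Fin (n+1) → ℝ) :
    ip n (w x) y = ip n x (v y) := by
  have h1 : w (v y) = y := by
    have : (w * v) y = y := by rw [hwv]; rfl
    exact this
  calc ip n (w x) y = ip n (w x) (w (v y)) := by rw [h1]
    _ = ip n x (v y) := iso_of_mem n hn w hw x (v y)

/-! ### length -/

def wlen (n : ℕ) (w : Function.End (Fin (n+1) → ℝ)) : ℕ :=
  sInf {k | ∃ L : List (Fin n), L.length = k ∧ wprod n L = w}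

lemma wlen_min_word (n : ℕ) (w : Function.End (Fin (n+1) → ℝ)) (hw : w ∈ Wgroup n) :
    ∃ L : List (Fin n), L.length = wlen n w ∧ wprod n L = w := by
  obtain ⟨L, rfl⟩ := (mem_Wgroup_iff n w).mp hw
  have hne : {k | ∃ L' : List (Fin n), L'.length = k ∧ wprod n L' = wprod n L}.Nonempty :=
    ⟨L.length, L, rfl, rfl⟩
  exact Nat.sInf_mem hne

lemma wlen_le (n : ℕ) (L : List (Fin n)) (w : Function.End (Fin (n+1) → ℝ))
    (h : wprod n L = w) : wlen n w ≤ L.length :=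
  Nat.sInf_le ⟨L, rfl, h⟩

lemma wlen_eq_zero (n : ℕ) (w : Function.End (Fin (n+1) → ℝ)) (hw : w ∈ Wgroup n)
    (h : wlen n w = 0) : w = 1 := by
  obtain ⟨L, hL, hLw⟩ := wlen_min_word n w hw
  rw [h] at hL
  rw [List.length_eq_zero_iff] at hL
  rw [hL] at hLw
  exact hLw.symm

lemma wlen_mul_sgen_le (n : ℕ) (w : Function.End (Fin (n+1) → ℝ)) (hw : w ∈ Wgroup n)
    (i : Fin n) : wlen n (w * sgen n i) ≤ wlen n w + 1 := by
  obtain ⟨L, hL, hLw⟩ := wlen_min_word n w hw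
  have : wprod n (L ++ [i]) = w * sgen n i := by
    rw [wprod_append, hLw, show wprod n [i] = sgen n i from by simp [wprod, sgen]]
  have h2 := wlen_le n (L ++ [i]) _ this
  simpa [hL] using h2

lemma wlen_le_mul_sgen (n : ℕ) (hn : 3 ≤ n) (w : Function.End (Fin (n+1) → ℝ))
    (hw : w ∈ Wgroup n) (i : Fin n) : wlen n w ≤ wlen n (w * sgen n i) + 1 := by
  have h1 : (w * sgen n i) * sgen n i = w := by
    rw [mul_assoc, sgen_invol n hn i, mul_one]
  have := wlen_mul_sgen_le n (w * sgen n i) ((Wgroup n).mul_mem hw (sgen_mem n i)) i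
  rwa [h1] at this

/-! ### the cone of positive roots -/

def ConeR (n : ℕ) (v : Fin (n+1) → ℝ) : Prop :=
  ∃ c : Fin n → ℝ, (∀ i, 0 ≤ c i) ∧ v = ∑ i : Fin n, c i • root n i

lemma cone_root (n : ℕ) (i : Fin n) : ConeR n (root n i) := by
  have hsum : ∑ j : Fin n, (if j = i then (1:ℝ) else 0) • root n j = root n i := by
    simp [ite_smul, Finset.sum_ite_eq, Finset.sum_ite_eq']
  exact ⟨fun j => if j = i then 1 else 0, fun j => by by_cases h : j = i <;> simp [h], hsum.symm⟩

lemma cone_add_smul (n : ℕ) (v u : Fin (n+1) → ℝ) (c : ℝ)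
    (hv : ConeR n v) (hu : ConeR n u) (hc : 0 ≤ c) : ConeR n (v + c • u) := by
  obtain ⟨a, ha, rfl⟩ := hv
  obtain ⟨b, hb, rfl⟩ := hu
  refine ⟨fun i => a i + c * b i, fun i => add_nonneg (ha i) (mul_nonneg hc (hb i)), ?_⟩
  rw [Finset.smul_sum, ← Finset.sum_add_distrib]
  refine Finset.sum_congr rfl fun i _ => ?_
  rw [add_smul, mul_smul]

/-- The key positivity theorem: if `wlen w ≤ wlen (w * s)` then `w(αₛ)` lies in the
nonnegative cone over the simple roots. -/
theorem pos_root (n : ℕ) (hn : 3 ≤ n) :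
    ∀ k (w : Function.End (Fin (n+1) → ℝ)), w ∈ Wgroup n → wlen n w ≤ k →
      ∀ s : Fin n, wlen n w ≤ wlen n (w * sgen n s) → ConeR n (w (root n s)) := by
  intro k
  induction k with
  | zero =>
      intro w hw hwk s _
      have h1 : w = 1 := wlen_eq_zero n w hw (by omega)
      rw [h1]
      exact cone_root n s
  | succ k ih =>
      intro w hw hwk s hws
      by_cases h0 : wlen n w = 0
      · rw [wlen_eq_zero n w hw h0]
        exact cone_root n s
      · obtain ⟨L, hL, hLw⟩ := wlen_min_word n w hw
        have hL0 : L ≠ [] := by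
          intro h
          rw [h] at hL
          simp at hL
          omega
        obtain ⟨t, ht⟩ : ∃ t', t' = L.getLast hL0 := ⟨_, rfl⟩
        have hsplit : wprod n L.dropLast * sgen n t = w := by
          have h1 : L.dropLast ++ [t] = L := by rw [ht]; exact List.dropLast_append_getLast hL0
          rw [show sgen n t = wprod n [t] from by simp [wprod, sgen], ← wprod_append, h1, hLw]
        obtain ⟨u, hu⟩ : ∃ u0, u0 = w * sgen n t := ⟨_, rfl⟩
        have hu_mem : u ∈ Wgroup n := by
          rw [hu]; exact (Wgroup n).mul_mem hw (sgen_mem n t)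
        have hA : u * sgen n t = w := by
          rw [hu, mul_assoc, sgen_invol n hn t, mul_one]
        have huw : u = wprod n L.dropLast := by
          rw [hu, ← hsplit, mul_assoc, sgen_invol n hn t, mul_one]
        have hulen_le : wlen n u + 1 ≤ wlen n w := by
          have h1 := wlen_le n L.dropLast u huw.symm
          have h2 : L.dropLast.length = L.length - 1 := by
            rw [List.length_dropLast]
          omega
        have hulen_ge : wlen n w ≤ wlen n u + 1 := by
          have := wlen_mul_sgen_le n u hu_mem t
          rwa [hA] at this
        have hts : t ≠ s := by
          intro h
          have hx : wlen n (w * sgen n s) = wlen n u := by rw [hu, h]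
          omega
        by_cases h1 : wlen n u ≤ wlen n (u * sgen n s)
        · -- both `u αₛ` and `u αₜ` are positive
          have hlen_u_k : wlen n u ≤ k := by omega
          have harg : wlen n u ≤ wlen n (u * sgen n t) := by rw [hA]; omega
          have c1 : ConeR n (u (root n s)) := ih u hu_mem hlen_u_k s h1
          have c2 : ConeR n (u (root n t)) := ih u hu_mem hlen_u_k t harg
          have e : w (root n s) = u (sgen n t (root n s)) := by rw [← hA]; rfl
          have e2 : sgen n t (root n s)
              = root n s + (ip n (root n s) (root n t)) • root n t := rfl
          have e3 : u (root n s + ip n (root n s) (root n t) • root n t)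
              = u (root n s) + ip n (root n s) (root n t) • u (root n t) :=
            lin_comb n u (lin_of_mem n u hu_mem) _ _ _
          rw [e, e2, e3]
          refine cone_add_smul n _ _ _ c1 c2 ?_
          rcases root_pair n hn s t (fun h => hts h.symm) with h | h <;> rw [h] <;> norm_num
        · push_neg at h1
          obtain ⟨u', hu'⟩ : ∃ u0, u0 = u * sgen n s := ⟨_, rfl⟩
          rw [← hu'] at h1
          have hu'_mem : u' ∈ Wgroup n := by
            rw [hu']; exact (Wgroup n).mul_mem hu_mem (sgen_mem n s)
          have hB : u' * sgen n s = u := by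
            rw [hu', mul_assoc, sgen_invol n hn s, mul_one]
          have hu'len : wlen n u' + 1 ≤ wlen n u := by
            have hz := wlen_le_mul_sgen n hn u hu_mem s
            rw [← hu'] at hz
            omega
          rcases root_pair n hn s t (fun h => hts h.symm) with hc0 | hc1
          · -- commuting case: contradiction
            have hcomm : sgen n s * sgen n t = sgen n t * sgen n s :=
              refl_comm n (root n s) (root n t) hc0
            have key : sgen n s * (sgen n t * sgen n s) = sgen n t := by
              rw [← mul_assoc, hcomm, mul_assoc, sgen_invol n hn s, mul_one]
            have hws' : w * sgen n s = u' * sgen n t := by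
              calc w * sgen n s = ((u' * sgen n s) * sgen n t) * sgen n s := by
                    rw [hB, hA]
                _ = u' * (sgen n s * (sgen n t * sgen n s)) := by simp [mul_assoc]
                _ = u' * sgen n t := by rw [key]
            have hb1 : wlen n (w * sgen n s) ≤ wlen n u' + 1 := by
              rw [hws']
              exact wlen_mul_sgen_le n u' hu'_mem t
            omega
          · by_cases h3 : wlen n u' ≤ wlen n (u' * sgen n t)
            · have c2 : ConeR n (u' (root n t)) := ih u' hu'_mem (by omega) t h3
              have e : w (root n s) = u' (sgen n s (sgen n t (root n s))) := by
                rw [← hA, ← hB]; rfl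
              have hts' : ip n (root n t) (root n s) = 1 := by
                rw [ip_comm]; exact hc1
              have scomp : sgen n s (sgen n t (root n s)) = root n t := by
                show reflAlong n (root n s) (reflAlong n (root n t) (root n s)) = root n t
                simp only [reflAlong_apply, ip_add_left, ip_smul_left, hc1, hts',
                  root_norm n hn s]
                funext j
                simp only [Pi.add_apply, Pi.smul_apply, smul_eq_mul]
                ring
              rw [e, scomp]
              exact c2
            · push_neg at h3
              obtain ⟨u'', hu''⟩ : ∃ u0, u0 = u' * sgen n t := ⟨_, rfl⟩
              rw [← hu''] at h3
              have hu''_mem : u'' ∈ Wgroup n := by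
                rw [hu'']; exact (Wgroup n).mul_mem hu'_mem (sgen_mem n t)
              have hC : u'' * sgen n t = u' := by
                rw [hu'', mul_assoc, sgen_invol n hn t, mul_one]
              have hu''len : wlen n u'' + 1 ≤ wlen n u' := by
                have hz := wlen_le_mul_sgen n hn u' hu'_mem t
                rw [← hu''] at hz
                omega
              have hbraid : sgen n s * sgen n t * sgen n s
                  = sgen n t * sgen n s * sgen n t :=
                refl_braid n (root n s) (root n t) (root_norm n hn s) (root_norm n hn t) hc1
              have key2 : sgen n t * (sgen n s * (sgen n t * sgen n s))
                  = sgen n s * sgen n t := by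
                calc sgen n t * (sgen n s * (sgen n t * sgen n s))
                    = (sgen n t * sgen n s * sgen n t) * sgen n s := by simp [mul_assoc]
                  _ = (sgen n s * sgen n t * sgen n s) * sgen n s := by rw [hbraid]
                  _ = sgen n s * sgen n t := by
                      rw [mul_assoc (sgen n s * sgen n t), sgen_invol n hn s, mul_one]
              have hws' : w * sgen n s = u'' * sgen n s * sgen n t := by
                calc w * sgen n s
                    = (((u'' * sgen n t) * sgen n s) * sgen n t) * sgen n s := by
                      rw [hC, hB, hA]
                  _ = u'' * (sgen n t * (sgen n s * (sgen n t * sgen n s))) := by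
                      simp [mul_assoc]
                  _ = u'' * (sgen n s * sgen n t) := by rw [key2]
                  _ = u'' * sgen n s * sgen n t := by rw [mul_assoc]
              have hb1 : wlen n (w * sgen n s) ≤ wlen n u'' + 2 := by
                rw [hws']
                have i1 := wlen_mul_sgen_le n (u'' * sgen n s)
                  ((Wgroup n).mul_mem hu''_mem (sgen_mem n s)) t
                have i2 := wlen_mul_sgen_le n u'' hu''_mem s
                omega
              omega

/-! ### dominance and reducedness -/

lemma ip_zero_right (n : ℕ) (v : Fin (n+1) → ℝ) : ip n v 0 = 0 := by
  simp [ip]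

lemma ip_sum_right (n : ℕ) (v : Fin (n+1) → ℝ) {β : Type} (s : Finset β)
    (f : β → (Fin (n+1) → ℝ)) : ip n v (∑ i ∈ s, f i) = ∑ i ∈ s, ip n v (f i) := by
  classical
  induction s using Finset.induction with
  | empty => simp [ip_zero_right]
  | @insert a s hx ih =>
      rw [Finset.sum_insert hx, Finset.sum_insert hx, ip_add_right, ih]

lemma ip_cone_nonneg (n : ℕ) (v y : Fin (n+1) → ℝ) (hy : ConeR n y)
    (hv : ∀ i : Fin n, 0 ≤ ip n v (root n i)) : 0 ≤ ip n v y := by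
  obtain ⟨c, hc, rfl⟩ := hy
  rw [ip_sum_right]
  refine Finset.sum_nonneg fun i _ => ?_
  rw [ip_smul_right]
  exact mul_nonneg (hc i) (hv i)

lemma mcoord_mk (n : ℕ) (v : Fin (n+1) → ℝ) (a : ℕ) (h : a < n) :
    mcoord n v ⟨a, h⟩ = -(v ⟨a+1, by omega⟩) := rfl

lemma filter_sum3 (n : ℕ) (hn : 3 ≤ n) (f : Fin n → ℝ) :
    ∑ i ∈ Finset.univ.filter (fun i : Fin n => (i : ℕ) < 3), f i
      = f ⟨0, by omega⟩ + f ⟨1, by omega⟩ + f ⟨2, by omega⟩ := by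
  have hset : Finset.univ.filter (fun i : Fin n => (i : ℕ) < 3)
      = {⟨0, by omega⟩, ⟨1, by omega⟩, ⟨2, by omega⟩} := by
    ext i
    simp only [Finset.mem_filter, Finset.mem_univ, true_and, Finset.mem_insert,
      Finset.mem_singleton]
    constructor
    · intro h
      have : (i:ℕ) = 0 ∨ (i:ℕ) = 1 ∨ (i:ℕ) = 2 := by omega
      rcases this with h | h | h
      · exact Or.inl (Fin.ext h)
      · exact Or.inr (Or.inl (Fin.ext h))
      · exact Or.inr (Or.inr (Fin.ext h))
    · rintro (rfl | rfl | rfl) <;> simp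
  rw [hset]
  rw [Finset.sum_insert (by
      simp only [Finset.mem_insert, Finset.mem_singleton]
      push_neg
      constructor <;> (intro h; have := congrArg Fin.val h; simp at this)),
    Finset.sum_insert (by
      simp only [Finset.mem_singleton]
      intro h; have := congrArg Fin.val h; simp at this),
    Finset.sum_singleton]
  ring

lemma anti_step (n : ℕ) (v : Fin (n+1) → ℝ) (hanti : Antitone (mcoord n v))
    (a : ℕ) (h : a + 1 < n) : v ⟨a+1, by omega⟩ ≤ v ⟨a+2, by omega⟩ := by
  have h1 : (⟨a, by omega⟩ : Fin n) ≤ ⟨a+1, h⟩ := by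
    rw [Fin.mk_le_mk]; omega
  have := hanti h1
  rw [mcoord_mk, mcoord_mk] at this
  linarith

lemma reduced_dominant (n : ℕ) (hn : 3 ≤ n) (v : Fin (n+1) → ℝ)
    (h : IsReducedVec n v) : ∀ i : Fin n, 0 ≤ ip n v (root n i) := by
  obtain ⟨hanti, hpos, hsum⟩ := h
  intro i
  by_cases hi : (i:ℕ) = 0
  · rw [ip_root_zero n hn i hi]
    rw [filter_sum3 n hn] at hsum
    rw [mcoord_mk, mcoord_mk, mcoord_mk] at hsum
    linarith
  · have hlt := i.isLt
    rw [ip_root_succ n i hi]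
    obtain ⟨a, ha⟩ : ∃ a, (i:ℕ) = a + 1 := ⟨(i:ℕ) - 1, by omega⟩
    have e1 : (⟨(i:ℕ), by omega⟩ : Fin (n+1)) = ⟨a+1, by omega⟩ := Fin.ext (by simp [ha])
    have e2 : (⟨(i:ℕ)+1, by omega⟩ : Fin (n+1)) = ⟨a+2, by omega⟩ := Fin.ext (by simp [ha])
    rw [e1, e2]
    have := anti_step n v hanti a (by omega)
    linarith

lemma dominant_reduced (n : ℕ) (hn : 3 ≤ n) (v : Fin (n+1) → ℝ)
    (hdom : ∀ i : Fin n, 0 ≤ ip n v (root n i)) (hEn : 0 < ip n v (En n)) :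
    IsReducedVec n v := by
  have hanti : Antitone (mcoord n v) := by
    have step : ∀ a : ℕ, ∀ h : a + 1 < n, mcoord n v ⟨a+1, h⟩ ≤ mcoord n v ⟨a, by omega⟩ := by
      intro a h
      have hd := hdom ⟨a+1, h⟩
      rw [ip_root_succ n ⟨a+1, h⟩ (by simp)] at hd
      rw [mcoord_mk, mcoord_mk]
      simp only [Fin.val_mk] at hd
      linarith
    have chain : ∀ b a : ℕ, ∀ _hab : a ≤ b, ∀ hb : b < n, mcoord n v ⟨b, hb⟩ ≤ mcoord n v ⟨a, by omega⟩ := by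
      intro b
      induction b with
      | zero =>
          intro a ha hb
          have : a = 0 := by omega
          subst this
          exact le_refl _
      | succ b ih =>
          intro a ha hb
          rcases Nat.lt_or_ge a (b+1) with h | h
          · calc mcoord n v ⟨b+1, hb⟩ ≤ mcoord n v ⟨b, by omega⟩ := step b hb
              _ ≤ mcoord n v ⟨a, by omega⟩ := ih a (by omega) (by omega)
          · have : a = b + 1 := by omega
            subst this
            exact le_refl _
    intro i j hij
    have h1 : mcoord n v ⟨(j:ℕ), j.isLt⟩ ≤ mcoord n v ⟨(i:ℕ), by omega⟩ := by
      exact chain (j:ℕ) (i:ℕ) hij j.isLt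
    simpa using h1
  have hEn' : 0 < mcoord n v ⟨n-1, by omega⟩ := by
    rw [ip_En' n (by omega)] at hEn
    rw [mcoord_mk]
    have e : (⟨n-1+1, by omega⟩ : Fin (n+1)) = ⟨n, by omega⟩ := Fin.ext (by simp; omega)
    rw [e]
    exact hEn
  refine ⟨hanti, ?_, ?_⟩
  · intro i
    have h1 : mcoord n v ⟨n-1, by omega⟩ ≤ mcoord n v i := by
      have : i ≤ ⟨n-1, by omega⟩ := by
        rw [Fin.le_def]
        simp
        omega
      have h2 := hanti this
      simpa using h2
    linarith
  · have hd := hdom ⟨0, by omega⟩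
    rw [ip_root_zero n hn ⟨0, by omega⟩ (by simp)] at hd
    rw [filter_sum3 n hn]
    rw [mcoord_mk, mcoord_mk, mcoord_mk]
    linarith

/-! ### uniqueness -/

lemma exists_last (n : ℕ) (hn : 3 ≤ n) (w : Function.End (Fin (n+1) → ℝ))
    (hw : w ∈ Wgroup n) (h0 : wlen n w ≠ 0) :
    ∃ t : Fin n, wlen n (w * sgen n t) + 1 ≤ wlen n w := by
  obtain ⟨L, hL, hLw⟩ := wlen_min_word n w hw
  have hL0 : L ≠ [] := by
    intro h
    rw [h] at hL
    simp at hL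
    omega
  refine ⟨L.getLast hL0, ?_⟩
  have hsplit : wprod n L.dropLast * sgen n (L.getLast hL0) = w := by
    have h1 : L.dropLast ++ [L.getLast hL0] = L := List.dropLast_append_getLast hL0
    rw [show sgen n (L.getLast hL0) = wprod n [L.getLast hL0] from by simp [wprod, sgen],
      ← wprod_append, h1, hLw]
  have huw : w * sgen n (L.getLast hL0) = wprod n L.dropLast := by
    rw [← hsplit, mul_assoc, sgen_invol n hn _, mul_one]
  have h1 := wlen_le n L.dropLast _ huw.symm
  have h2 : L.dropLast.length = L.length - 1 := by rw [List.length_dropLast]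
  omega

theorem dominant_unique (n : ℕ) (hn : 3 ≤ n) :
    ∀ k (w : Function.End (Fin (n+1) → ℝ)), w ∈ Wgroup n → wlen n w ≤ k →
      ∀ x : Fin (n+1) → ℝ, (∀ i : Fin n, 0 ≤ ip n x (root n i)) →
        (∀ i : Fin n, 0 ≤ ip n (w x) (root n i)) → w x = x := by
  intro k
  induction k with
  | zero =>
      intro w hw hwk x _ _
      rw [wlen_eq_zero n w hw (by omega)]
      rfl
  | succ k ih =>
      intro w hw hwk x hx hwx
      by_cases h0 : wlen n w = 0
      · rw [wlen_eq_zero n w hw h0]; rfl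
      · obtain ⟨t, ht1⟩ := exists_last n hn w hw h0
        obtain ⟨u, hu⟩ : ∃ u0, u0 = w * sgen n t := ⟨_, rfl⟩
        have hu_mem : u ∈ Wgroup n := by
          rw [hu]; exact (Wgroup n).mul_mem hw (sgen_mem n t)
        have hA : u * sgen n t = w := by
          rw [hu, mul_assoc, sgen_invol n hn t, mul_one]
        have hulen : wlen n u + 1 ≤ wlen n w := by rw [hu]; exact ht1
        -- `u αₜ` is in the positive cone
        have hcone : ConeR n (u (root n t)) := by
          refine pos_root n hn (wlen n u) u hu_mem le_rfl t ?_
          rw [hA]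
          omega
        -- hence `ip x αₜ ≤ 0`, so `= 0`, so `sgen t x = x`
        have hrootneg : w (root n t) = -(u (root n t)) := by
          have e1 : sgen n t (root n t) = -(root n t) := by
            show reflAlong n (root n t) (root n t) = -(root n t)
            rw [reflAlong_apply, root_norm n hn t]
            funext j
            simp only [Pi.add_apply, Pi.smul_apply, Pi.neg_apply, smul_eq_mul]
            ring
          have e2 : w (root n t) = u (sgen n t (root n t)) := by rw [← hA]; rfl
          rw [e2, e1]
          exact lin_neg n u (lin_of_mem n u hu_mem) _
        have hle : ip n x (root n t) ≤ 0 := by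
          have e3 : ip n x (root n t) = ip n (w x) (w (root n t)) :=
            (iso_of_mem n hn w hw x (root n t)).symm
          rw [e3, hrootneg, ip_neg_right]
          have h4 : 0 ≤ ip n (w x) (u (root n t)) :=
            ip_cone_nonneg n (w x) _ hcone hwx
          linarith
        have hzero : ip n x (root n t) = 0 := le_antisymm hle (hx t)
        have hfix : sgen n t x = x := by
          show reflAlong n (root n t) x = x
          rw [reflAlong_apply, hzero]
          funext j
          simp only [Pi.add_apply, Pi.smul_apply, smul_eq_mul]
          ring
        have hux : u x = w x := by
          calc u x = u (sgen n t x) := by rw [hfix]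
            _ = (u * sgen n t) x := rfl
            _ = w x := by rw [hA]
        have hfin := ih u hu_mem (by omega) x hx (by rw [hux]; exact hwx)
        rw [← hux]
        exact hfin

/-! ### exceptional classes -/

lemma En_mem_EK (n : ℕ) : En n ∈ EK n := ⟨1, (Wgroup n).one_mem, rfl⟩

lemma EK_stable (n : ℕ) (w : Function.End (Fin (n+1) → ℝ)) (hw : w ∈ Wgroup n)
    (e : Fin (n+1) → ℝ) (he : e ∈ EK n) : w e ∈ EK n := by
  obtain ⟨w', hw', rfl⟩ := he
  exact ⟨w * w', (Wgroup n).mul_mem hw hw', rfl⟩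

def evec (n m : ℕ) : Fin (n+1) → ℝ := fun l => if (l:ℕ) = m then 1 else 0

lemma evec_mem_aux (n : ℕ) (hn : 3 ≤ n) :
    ∀ k m, 1 ≤ m → m ≤ n → n - m = k → evec n m ∈ EK n := by
  intro k
  induction k with
  | zero =>
      intro m h1 h2 h3
      have hmn : m = n := by omega
      rw [hmn]
      exact En_mem_EK n
  | succ k ih =>
      intro m h1 h2 h3
      have hm : m < n := by omega
      have hprev : evec n (m+1) ∈ EK n := ih (m+1) (by omega) (by omega) (by omega)
      have hi : ((⟨m, hm⟩ : Fin n) : ℕ) ≠ 0 := by simp; omega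
      have hkey : sgen n ⟨m, hm⟩ (evec n (m+1)) = evec n m := by
        show reflAlong n (root n ⟨m, hm⟩) (evec n (m+1)) = evec n m
        rw [reflAlong_apply]
        have hip : ip n (evec n (m+1)) (root n ⟨m, hm⟩) = 1 := by
          rw [ip_root_succ n ⟨m, hm⟩ hi]
          simp only [evec, Fin.val_mk]
          rw [if_neg (show ¬(m = m+1) by omega)]
          simp
        rw [hip, one_smul]
        funext j
        simp only [Pi.add_apply, evec, root_apply' n ⟨m, hm⟩ hi j, Fin.val_mk]
        split_ifs <;> first | omega | norm_num
      rw [← hkey]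
      exact EK_stable n _ (sgen_mem n ⟨m, hm⟩) _ hprev

lemma evec_mem (n : ℕ) (hn : 3 ≤ n) (m : ℕ) (h1 : 1 ≤ m) (h2 : m ≤ n) :
    evec n m ∈ EK n :=
  evec_mem_aux n hn (n - m) m h1 h2 rfl

def hvec (n : ℕ) : Fin (n+1) → ℝ :=
  fun j => if (j:ℕ) = 0 then 1 else if (j:ℕ) ≤ 2 then -1 else 0

lemma hvec_mem (n : ℕ) (hn : 3 ≤ n) : hvec n ∈ EK n := by
  have h3 : evec n 3 ∈ EK n := evec_mem n hn 3 (by omega) hn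
  have hi : ((⟨0, by omega⟩ : Fin n) : ℕ) = 0 := rfl
  have hkey : sgen n ⟨0, by omega⟩ (evec n 3) = hvec n := by
    show reflAlong n (root n ⟨0, by omega⟩) (evec n 3) = hvec n
    rw [reflAlong_apply]
    have hip : ip n (evec n 3) (root n ⟨0, by omega⟩) = 1 := by
      rw [ip_root_zero n hn _ hi]
      simp [evec]
    rw [hip, one_smul]
    funext j
    simp only [Pi.add_apply, evec, hvec, root0_apply n ⟨0, by omega⟩ hi j]
    split_ifs <;> first | omega | norm_num
  rw [← hkey]
  exact EK_stable n _ (sgen_mem n _) _ h3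

lemma ip_hvec (n : ℕ) (hn : 3 ≤ n) (v : Fin (n+1) → ℝ) :
    ip n v (hvec n) = v 0 + v ⟨1, by omega⟩ + v ⟨2, by omega⟩ := by
  rw [ip]
  rw [show hvec n 0 = 1 from by simp [hvec]]
  rw [Finset.sum_eq_add (⟨0, by omega⟩ : Fin n) (⟨1, by omega⟩ : Fin n)
    (by intro h; have := congrArg Fin.val h; simp at this)
    (by
      intro c _ hc
      have hc1 : (c:ℕ) ≠ 0 := fun h => hc.1 (Fin.ext h)
      have hc2 : (c:ℕ) ≠ 1 := fun h => hc.2 (Fin.ext h)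
      have hcs : ((c.succ : Fin (n+1)) : ℕ) = (c:ℕ)+1 := rfl
      rw [show hvec n c.succ = 0 from by rw [hvec]; simp only [hcs]; rw [if_neg (by omega), if_neg (by omega)]]
      ring)
    (by intro h; exact absurd (Finset.mem_univ _) h)
    (by intro h; exact absurd (Finset.mem_univ _) h)]
  have e1 : (((⟨0, by omega⟩ : Fin n).succ : Fin (n+1))) = ⟨1, by omega⟩ := Fin.ext rfl
  have e2 : (((⟨1, by omega⟩ : Fin n).succ : Fin (n+1))) = ⟨2, by omega⟩ := Fin.ext rfl
  rw [e1, e2]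
  rw [show hvec n ⟨1, by omega⟩ = -1 from by simp [hvec]]
  rw [show hvec n ⟨2, by omega⟩ = -1 from by simp [hvec]]
  ring

lemma dcoord_neg (n : ℕ) (hn : 3 ≤ n) (d : Fin (n+1) → ℝ)
    (hdE : ∀ E ∈ EK n, 0 < ip n d E) (m : ℕ) (h1 : 1 ≤ m) (h2 : m ≤ n) :
    d ⟨m, by omega⟩ < 0 := by
  have := hdE (evec n m) (evec_mem n hn m h1 h2)
  rw [show evec n m = (fun l : Fin (n+1) => if (l:ℕ) = m then (1:ℝ) else 0) from rfl,
    ip_evec n m h1 h2 d] at this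
  linarith

lemma d0_pos (n : ℕ) (hn : 3 ≤ n) (d : Fin (n+1) → ℝ)
    (hdE : ∀ E ∈ EK n, 0 < ip n d E) : 0 < d 0 := by
  have h1 : d ⟨1, by omega⟩ < 0 := dcoord_neg n hn d hdE 1 (by omega) (by omega)
  have h2 : d ⟨2, by omega⟩ < 0 := dcoord_neg n hn d hdE 2 (by omega) (by omega)
  have hH := hdE (hvec n) (hvec_mem n hn)
  rw [ip_hvec n hn d] at hH
  linarith

/-! ### the strictly dominant integral timelike class `p` -/

def pvec (n : ℕ) : Fin (n+1) → ℝ :=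
  fun j => if (j:ℕ) = 0 then ((n:ℝ))^2 else ((j:ℕ):ℝ) - ((n:ℝ)+1)

lemma pvec_root_pos (n : ℕ) (hn : 3 ≤ n) (i : Fin n) : 0 < ip n (pvec n) (root n i) := by
  have hc : (3:ℝ) ≤ (n:ℝ) := by exact_mod_cast hn
  by_cases hi : (i:ℕ) = 0
  · rw [ip_root_zero n hn i hi]
    simp only [pvec, Fin.val_mk, Fin.val_zero]
    norm_num
    nlinarith
  · have hlt := i.isLt
    rw [ip_root_succ n i hi]
    simp only [pvec, Fin.val_mk]
    rw [if_neg (by omega), if_neg (by omega)]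
    push_cast
    linarith

lemma pvec_zero_pos (n : ℕ) (hn : 3 ≤ n) : 0 < pvec n 0 := by
  have hc : (3:ℝ) ≤ (n:ℝ) := by exact_mod_cast hn
  have h0 : pvec n 0 = (n:ℝ)^2 := by simp [pvec]
  rw [h0]
  nlinarith

lemma pvec_norm_pos (n : ℕ) (hn : 3 ≤ n) : 0 < ip n (pvec n) (pvec n) := by
  have hc : (3:ℝ) ≤ (n:ℝ) := by exact_mod_cast hn
  rw [ip]
  have h0 : pvec n 0 = (n:ℝ)^2 := by simp [pvec]
  have hb : ∀ k : Fin n, pvec n k.succ * pvec n k.succ ≤ (n:ℝ)^2 := by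
    intro k
    have hks : ((k.succ : Fin (n+1)) : ℕ) = (k:ℕ)+1 := rfl
    have he : pvec n k.succ = ((k:ℕ):ℝ) + 1 - ((n:ℝ)+1) := by
      rw [pvec]
      simp only [hks]
      rw [if_neg (by omega)]
      push_cast
      ring
    rw [he]
    have h1 : ((k:ℕ):ℝ) ≤ (n:ℝ) - 1 := by
      have h2 : (k:ℕ) + 1 ≤ n := k.isLt
      have h3 : ((k:ℕ):ℝ) + 1 ≤ (n:ℝ) := by exact_mod_cast h2
      linarith
    have h2 : (0:ℝ) ≤ ((k:ℕ):ℝ) := by positivity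
    nlinarith
  have hsum : ∑ k : Fin n, pvec n k.succ * pvec n k.succ ≤ (n:ℝ) * (n:ℝ)^2 := by
    calc ∑ k : Fin n, pvec n k.succ * pvec n k.succ
        ≤ ∑ _k : Fin n, (n:ℝ)^2 := Finset.sum_le_sum (fun k _ => hb k)
      _ = (n:ℝ) * (n:ℝ)^2 := by
          rw [Finset.sum_const, Finset.card_univ, Fintype.card_fin, nsmul_eq_mul]
  rw [h0]
  nlinarith

/-! ### integrality -/

def IsIntVec (n : ℕ) (q : Fin (n+1) → ℝ) : Prop := ∀ j, ∃ z : ℤ, q j = z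

lemma int_ip (n : ℕ) (x y : Fin (n+1) → ℝ) (hx : IsIntVec n x) (hy : IsIntVec n y) :
    ∃ z : ℤ, ip n x y = z := by
  choose a ha using hx
  choose b hb using hy
  refine ⟨a 0 * b 0 - ∑ i : Fin n, a i.succ * b i.succ, ?_⟩
  rw [ip]
  push_cast
  rw [ha 0, hb 0]
  congr 1
  refine Finset.sum_congr rfl fun i _ => ?_
  rw [ha i.succ, hb i.succ]

lemma int_root (n : ℕ) (i : Fin n) : IsIntVec n (root n i) := by
  intro j
  by_cases hi : (i:ℕ) = 0
  · rw [root0_apply n i hi j]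
    split_ifs
    · exact ⟨1, by norm_num⟩
    · exact ⟨-1, by norm_num⟩
    · exact ⟨0, by norm_num⟩
  · rw [root_apply' n i hi j]
    split_ifs
    · exact ⟨1, by norm_num⟩
    · exact ⟨-1, by norm_num⟩
    · exact ⟨0, by norm_num⟩

lemma int_pvec (n : ℕ) : IsIntVec n (pvec n) := by
  intro j
  by_cases hj : (j:ℕ) = 0
  · refine ⟨(n:ℤ)^2, ?_⟩
    rw [pvec]
    simp only [hj, if_pos rfl]
    push_cast
    ring
  · refine ⟨((j:ℕ):ℤ) - ((n:ℤ)+1), ?_⟩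
    rw [pvec]
    simp only [if_neg hj]
    push_cast
    ring

lemma int_sgen (n : ℕ) (i : Fin n) (q : Fin (n+1) → ℝ) (hq : IsIntVec n q) :
    IsIntVec n (sgen n i q) := by
  obtain ⟨zc, hzc⟩ := int_ip n q (root n i) hq (int_root n i)
  intro j
  obtain ⟨zq, hzq⟩ := hq j
  obtain ⟨zr, hzr⟩ := int_root n i j
  refine ⟨zq + zc * zr, ?_⟩
  show (reflAlong n (root n i) q) j = _
  rw [reflAlong_apply]
  simp only [Pi.add_apply, Pi.smul_apply, smul_eq_mul]
  rw [hzq, hzc, hzr]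
  push_cast
  ring

/-! ### timelike geometry -/

lemma cone_pos (n : ℕ) (x y : Fin (n+1) → ℝ) (hx : 0 < ip n x x) (hy : 0 < ip n y y)
    (hxy : 0 < ip n x y) (hx0 : 0 < x 0) : 0 < y 0 := by
  by_contra hneg
  push_neg at hneg
  rw [ip] at hx hy hxy
  have hA : (0:ℝ) ≤ ∑ i : Fin n, x i.succ * x i.succ :=
    Finset.sum_nonneg fun i _ => mul_self_nonneg _
  have hB : (0:ℝ) ≤ ∑ i : Fin n, y i.succ * y i.succ :=
    Finset.sum_nonneg fun i _ => mul_self_nonneg _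
  have hCS := Finset.sum_mul_sq_le_sq_mul_sq Finset.univ
    (fun i : Fin n => x i.succ) (fun i : Fin n => y i.succ)
  have e1 : ∑ i : Fin n, x i.succ ^ 2 = ∑ i : Fin n, x i.succ * x i.succ :=
    Finset.sum_congr rfl fun i _ => pow_two _
  have e2 : ∑ i : Fin n, y i.succ ^ 2 = ∑ i : Fin n, y i.succ * y i.succ :=
    Finset.sum_congr rfl fun i _ => pow_two _
  rw [e1, e2] at hCS
  have hy0 : y 0 < 0 := by
    rcases lt_or_eq_of_le hneg with h | h
    · exact h
    · rw [h] at hy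
      simp at hy
      linarith
  have h1 : (∑ i : Fin n, x i.succ * y i.succ) < x 0 * y 0 := by linarith
  have h2 : x 0 * y 0 < 0 := mul_neg_of_pos_of_neg hx0 hy0
  have h4 : (0:ℝ) < x 0 * y 0 - ∑ i : Fin n, x i.succ * y i.succ := by linarith
  have h5 : (0:ℝ) < -(x 0 * y 0 + ∑ i : Fin n, x i.succ * y i.succ) := by linarith
  have h3 : (∑ i : Fin n, x i.succ * y i.succ)^2 > (x 0 * y 0)^2 := by
    nlinarith [mul_pos h4 h5]
  have hy2 : (0:ℝ) < y 0 * y 0 := mul_pos_of_neg_of_neg hy0 hy0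
  have step1 : (∑ i : Fin n, x i.succ * x i.succ) * (∑ i : Fin n, y i.succ * y i.succ)
      ≤ (∑ i : Fin n, x i.succ * x i.succ) * (y 0 * y 0) :=
    mul_le_mul_of_nonneg_left (by linarith) hA
  have step2 : (∑ i : Fin n, x i.succ * x i.succ) * (y 0 * y 0)
      < (x 0 * x 0) * (y 0 * y 0) :=
    mul_lt_mul_of_pos_right (by linarith) hy2
  nlinarith

/-! ### orbit invariants -/

lemma orbit_props (n : ℕ) (hn : 3 ≤ n) (L : List (Fin n)) :
    IsIntVec n (wprod n L (pvec n)) ∧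
      ip n (wprod n L (pvec n)) (wprod n L (pvec n)) = ip n (pvec n) (pvec n) ∧
      0 < (wprod n L (pvec n)) 0 := by
  induction L with
  | nil => exact ⟨int_pvec n, rfl, pvec_zero_pos n hn⟩
  | cons i L ih =>
      obtain ⟨h1, h2, h3⟩ := ih
      have hq : wprod n (i :: L) (pvec n) = sgen n i (wprod n L (pvec n)) := by
        rw [wprod_cons]; rfl
      have hnorm : ip n (wprod n L (pvec n)) (wprod n L (pvec n)) > 0 := by
        rw [h2]; exact pvec_norm_pos n hn
      refine ⟨?_, ?_, ?_⟩
      · rw [hq]; exact int_sgen n i _ h1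
      · rw [hq, sgen_iso n hn i, h2]
      · rw [hq]
        have hmix : ip n (wprod n L (pvec n)) (sgen n i (wprod n L (pvec n)))
            = ip n (wprod n L (pvec n)) (wprod n L (pvec n))
              + (ip n (wprod n L (pvec n)) (root n i))^2 := by
          show ip n _ (reflAlong n (root n i) _) = _
          rw [reflAlong_apply, ip_add_right, ip_smul_right]
          ring
        refine cone_pos n (wprod n L (pvec n)) _ hnorm ?_ ?_ h3
        · rw [sgen_iso n hn i, h2]; exact pvec_norm_pos n hn
        · rw [hmix]
          have := sq_nonneg (ip n (wprod n L (pvec n)) (root n i))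
          linarith

/-! ### existence of a reduced representative -/

lemma exists_reduced (n : ℕ) (hn : 3 ≤ n) (d : Fin (n+1) → ℝ)
    (hdd : 0 < ip n d d) (hdE : ∀ E ∈ EK n, 0 < ip n d E) :
    ∃ w ∈ Wgroup n, IsReducedVec n (w d) := by
  classical
  have hd0 : 0 < d 0 := d0_pos n hn d hdE
  set C := ip n d (pvec n) with hC
  set Pset : Set (Fin (n+1) → ℝ) := {q | ∃ w ∈ Wgroup n, q = w (pvec n)} with hPset
  have hPprops : ∀ q ∈ Pset,
      IsIntVec n q ∧ ip n q q = ip n (pvec n) (pvec n) ∧ 0 < q 0 := by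
    rintro q ⟨w, hw, rfl⟩
    obtain ⟨L, rfl⟩ := (mem_Wgroup_iff n w).mp hw
    exact orbit_props n hn L
  set D := ∑ i : Fin n, d i.succ * d i.succ with hD
  have hD0 : (0:ℝ) ≤ D := Finset.sum_nonneg fun i _ => mul_self_nonneg _
  set δ := Real.sqrt D with hδ
  have hδ0 : 0 ≤ δ := Real.sqrt_nonneg _
  have hδlt : δ < d 0 := by
    have h1 : D < d 0 * d 0 := by rw [ip] at hdd; linarith
    have h2 : δ < Real.sqrt (d 0 ^ 2) := by
      rw [hδ]
      apply Real.sqrt_lt_sqrt hD0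
      nlinarith
    rwa [Real.sqrt_sq hd0.le] at h2
  set B := C / (d 0 - δ) with hB
  have hbound : ∀ q ∈ Pset, ip n d q ≤ C → ∀ j, |q j| ≤ B := by
    intro q hq hqC
    obtain ⟨hint, hnorm, hq0⟩ := hPprops q hq
    have hppos := pvec_norm_pos n hn
    have hQ : ∑ i : Fin n, q i.succ * q i.succ ≤ q 0 ^ 2 := by
      rw [ip] at hnorm
      nlinarith
    have hQ0 : (0:ℝ) ≤ ∑ i : Fin n, q i.succ * q i.succ :=
      Finset.sum_nonneg fun i _ => mul_self_nonneg _
    have hCS := Finset.sum_mul_sq_le_sq_mul_sq Finset.univ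
      (fun i : Fin n => d i.succ) (fun i : Fin n => q i.succ)
    have e1 : ∑ i : Fin n, d i.succ ^ 2 = D := Finset.sum_congr rfl fun i _ => pow_two _
    have e2 : ∑ i : Fin n, q i.succ ^ 2 = ∑ i : Fin n, q i.succ * q i.succ :=
      Finset.sum_congr rfl fun i _ => pow_two _
    rw [e1, e2] at hCS
    have hs : (∑ i : Fin n, d i.succ * q i.succ) ≤ δ * q 0 := by
      have h2 : Real.sqrt ((∑ i : Fin n, d i.succ * q i.succ)^2)
          ≤ Real.sqrt (D * (∑ i : Fin n, q i.succ * q i.succ)) := Real.sqrt_le_sqrt hCS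
      rw [Real.sqrt_sq_eq_abs, Real.sqrt_mul hD0] at h2
      have h5 : Real.sqrt (∑ i : Fin n, q i.succ * q i.succ) ≤ q 0 := by
        calc Real.sqrt (∑ i : Fin n, q i.succ * q i.succ)
            ≤ Real.sqrt (q 0 ^ 2) := Real.sqrt_le_sqrt hQ
          _ = q 0 := Real.sqrt_sq hq0.le
      calc (∑ i : Fin n, d i.succ * q i.succ)
          ≤ |∑ i : Fin n, d i.succ * q i.succ| := le_abs_self _
        _ ≤ δ * Real.sqrt (∑ i : Fin n, q i.succ * q i.succ) := h2
        _ ≤ δ * q 0 := mul_le_mul_of_nonneg_left h5 hδ0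
    have hq0B : q 0 ≤ B := by
      have h6 : (d 0 - δ) * q 0 ≤ C := by
        have hipdq : ip n d q = d 0 * q 0 - ∑ i : Fin n, d i.succ * q i.succ := by rw [ip]
        nlinarith
      rw [hB, le_div_iff₀ (by linarith)]
      linarith
    intro j
    by_cases hj : (j:ℕ) = 0
    · have hj0 : j = 0 := Fin.ext (by simp [hj])
      rw [hj0, abs_of_pos hq0]
      exact hq0B
    · have hjlt := j.isLt
      have hk : ((⟨(j:ℕ)-1, by omega⟩ : Fin n).succ : Fin (n+1)) = j :=
        Fin.ext (by simp; omega)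
      have hsing : q j * q j ≤ ∑ i : Fin n, q i.succ * q i.succ := by
        have h8 : q (⟨(j:ℕ)-1, by omega⟩ : Fin n).succ * q (⟨(j:ℕ)-1, by omega⟩ : Fin n).succ
            ≤ ∑ i : Fin n, q i.succ * q i.succ :=
          Finset.single_le_sum (f := fun i : Fin n => q i.succ * q i.succ)
            (fun i _ => mul_self_nonneg _) (Finset.mem_univ _)
        rwa [hk] at h8
      have habs : |q j| ≤ q 0 := by
        rw [← Real.sqrt_mul_self_eq_abs]
        calc Real.sqrt (q j * q j) ≤ Real.sqrt (q 0 ^ 2) :=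
              Real.sqrt_le_sqrt (by nlinarith)
          _ = q 0 := Real.sqrt_sq hq0.le
      linarith
  set M : ℤ := ⌈B⌉ with hM
  set S0 : Set (Fin (n+1) → ℝ) := {q ∈ Pset | ip n d q ≤ C} with hS0
  have hfin : S0.Finite := by
    have hsub : S0 ⊆ Set.univ.pi
        (fun _ : Fin (n+1) => ((fun z : ℤ => (z:ℝ)) ''
          ((Finset.Icc (-M) M : Finset ℤ) : Set ℤ))) := by
      intro q hq
      rw [Set.mem_pi]
      intro j _
      obtain ⟨hint, _, _⟩ := hPprops q hq.1
      obtain ⟨z, hz⟩ := hint j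
      refine ⟨z, ?_, hz.symm⟩
      simp only [Finset.coe_Icc, Set.mem_Icc]
      have hb := hbound q hq.1 hq.2 j
      rw [hz] at hb
      have h1 : (z:ℝ) ≤ B := (abs_le.mp hb).2
      have h2 : -B ≤ (z:ℝ) := (abs_le.mp hb).1
      have hMB : B ≤ (M:ℝ) := Int.le_ceil B
      constructor
      · have h3 : -(M:ℝ) ≤ (z:ℝ) := by linarith
        exact_mod_cast h3
      · have h3 : (z:ℝ) ≤ (M:ℝ) := by linarith
        exact_mod_cast h3
    exact Set.Finite.subset
      (Set.Finite.pi (fun j => Set.Finite.image _ (Finset.finite_toSet _))) hsub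
  have hp_mem : pvec n ∈ Pset := ⟨1, (Wgroup n).one_mem, rfl⟩
  have hne : S0.Nonempty := ⟨pvec n, hp_mem, le_refl C⟩
  obtain ⟨qmin, hqmin_mem, hmin⟩ := Set.exists_min_image S0 (fun q => ip n d q) hfin hne
  have hglobal : ∀ q ∈ Pset, ip n d qmin ≤ ip n d q := by
    intro q hq
    by_cases h : ip n d q ≤ C
    · exact hmin q ⟨hq, h⟩
    · push_neg at h
      have h2 := hmin (pvec n) ⟨hp_mem, le_refl C⟩
      linarith
  obtain ⟨w0, hw0, hq0eq⟩ := hqmin_mem.1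
  obtain ⟨v0, hv0, hwv0, hvw0⟩ := exists_inverse n hn w0 hw0
  refine ⟨v0, hv0, ?_⟩
  have hxp : ip n (v0 d) (pvec n) = ip n d qmin := by
    rw [ip_move n hn v0 w0 hv0 hvw0 d (pvec n), ← hq0eq]
  have hdom : ∀ i : Fin n, 0 ≤ ip n (v0 d) (root n i) := by
    intro i
    by_contra hneg
    push_neg at hneg
    have hmemi : sgen n i * v0 ∈ Wgroup n := (Wgroup n).mul_mem (sgen_mem n i) hv0
    have hinvi : (sgen n i * v0) * (w0 * sgen n i) = 1 := by
      calc (sgen n i * v0) * (w0 * sgen n i)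
          = sgen n i * ((v0 * w0) * sgen n i) := by simp [mul_assoc]
        _ = sgen n i * sgen n i := by rw [hvw0, one_mul]
        _ = 1 := sgen_invol n hn i
    have hsp : ip n (sgen n i (v0 d)) (pvec n) = ip n d ((w0 * sgen n i) (pvec n)) :=
      ip_move n hn (sgen n i * v0) (w0 * sgen n i) hmemi hinvi d (pvec n)
    have hexp : ip n (sgen n i (v0 d)) (pvec n)
        = ip n (v0 d) (pvec n) + ip n (v0 d) (root n i) * ip n (root n i) (pvec n) := by
      show ip n (reflAlong n (root n i) (v0 d)) (pvec n) = _
      rw [reflAlong_apply, ip_comb_left]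
    have hrp : 0 < ip n (root n i) (pvec n) := by
      rw [ip_comm]; exact pvec_root_pos n hn i
    have hq' : (w0 * sgen n i) (pvec n) ∈ Pset :=
      ⟨w0 * sgen n i, (Wgroup n).mul_mem hw0 (sgen_mem n i), rfl⟩
    have hgl := hglobal _ hq'
    rw [← hsp, hexp, hxp] at hgl
    have hprod : ip n (v0 d) (root n i) * ip n (root n i) (pvec n) < 0 :=
      mul_neg_of_neg_of_pos hneg hrp
    linarith
  have hEn : 0 < ip n (v0 d) (En n) := by
    rw [ip_move n hn v0 w0 hv0 hvw0 d (En n)]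
    exact hdE _ ⟨w0, hw0, rfl⟩
  exact dominant_reduced n hn (v0 d) hdom hEn

/-- Proposition 2.11(4): every class of positive square pairing positively with all
exceptional classes has a `W_n`-reduced representative, and this reduced
representative is unique. -/
theorem exists_unique_reduced_representative
    (n : ℕ) (hn : 3 ≤ n) (d : Fin (n + 1) → ℝ)
    (hdd : 0 < ip n d d)
    (hdE : ∀ E ∈ EK n, 0 < ip n d E) :
    (∃ w ∈ Wgroup n, IsReducedVec n (w d)) ∧
    (∀ w₁ ∈ Wgroup n, ∀ w₂ ∈ Wgroup n,
      IsReducedVec n (w₁ d) → IsReducedVec n (w₂ d) → w₁ d = w₂ d) := by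
  constructor
  · exact exists_reduced n hn d hdd hdE
  · intro w₁ hw₁ w₂ hw₂ h₁ h₂
    obtain ⟨v1, hv1, hwv1, hvw1⟩ := exists_inverse n hn w₁ hw₁
    have hxdom := reduced_dominant n hn (w₁ d) h₁
    have hydom := reduced_dominant n hn (w₂ d) h₂
    have hWmem : w₂ * v1 ∈ Wgroup n := (Wgroup n).mul_mem hw₂ hv1
    have happ : (w₂ * v1) (w₁ d) = w₂ d := by
      have hid : v1 (w₁ d) = d := by
        show (v1 * w₁) d = d
        rw [hvw1]; rfl
      show w₂ (v1 (w₁ d)) = w₂ d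
      rw [hid]
    have hu := dominant_unique n hn (wlen n (w₂ * v1)) (w₂ * v1) hWmem le_rfl
      (w₁ d) hxdom (by rw [happ]; exact hydom)
    rw [happ] at hu
    exact hu.symm

end
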